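/- arXiv:1105.4673 — 2 statements merged into one kernel-verified Lean document; each statement's English description precedes it below -/
import Mathlib

section
/- (Lie–Trotter product formula, finite dimensions) For linear operators A and B on a finite-dimensional vector space and any t, the product (e^{(t/n)A} e^{(t/n)B})^n converges to e^{t(A+B)} as n → ∞. -/
open NormedSpace Filter Topology

section Aux

variable {𝔸 : Type*} [NormedRing 𝔸] [NormedAlgebra ℝ 𝔸] [CompleteSpace 𝔸] [NormOneClass 𝔸]

lemma real_exp_tsum (a : ℝ) : Real.exp a = ∑' n : ℕ, ((n.factorial : ℝ))⁻¹ * a ^ n := by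
  rw [Real.exp_eq_exp_ℝ, exp_eq_tsum (𝕂 := ℝ)]
  simp [smul_eq_mul]

lemma trotter_norm_exp_le (x : 𝔸) : ‖exp x‖ ≤ Real.exp ‖x‖ := by
  rw [exp_eq_tsum (𝕂 := ℝ)]
  refine (norm_tsum_le_tsum_norm (norm_expSeries_summable' x)).trans ?_
  rw [real_exp_tsum]
  refine Summable.tsum_le_tsum (fun n => ?_) (norm_expSeries_summable' x) ?_
  · rw [norm_smul, norm_inv, Real.norm_natCast]
    exact mul_le_mul_of_nonneg_left (norm_pow_le x n)
      (inv_nonneg.2 (Nat.cast_nonneg _))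
  · simpa [div_eq_mul_inv, mul_comm] using Real.summable_pow_div_factorial ‖x‖

lemma trotter_remainder (x : 𝔸) : ‖exp x - 1 - x‖ ≤ ‖x‖ ^ 2 * Real.exp ‖x‖ := by
  have hs : Summable fun n : ℕ => ((n.factorial : ℝ))⁻¹ • x ^ n := expSeries_summable' x
  have hs1 : Summable fun n : ℕ => (((n + 1).factorial : ℝ))⁻¹ • x ^ (n + 1) :=
    (summable_nat_add_iff 1).2 hs
  have key : exp x - 1 - x = ∑' n : ℕ, (((n + 2).factorial : ℝ))⁻¹ • x ^ (n + 2) := by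
    have h1 : (∑' n : ℕ, ((n.factorial : ℝ))⁻¹ • x ^ n)
        = (((0 : ℕ).factorial : ℝ))⁻¹ • x ^ 0
          + ∑' n : ℕ, (((n + 1).factorial : ℝ))⁻¹ • x ^ (n + 1) :=
      Summable.tsum_eq_zero_add hs
    have h2 : (∑' n : ℕ, (((n + 1).factorial : ℝ))⁻¹ • x ^ (n + 1))
        = (((1 : ℕ).factorial : ℝ))⁻¹ • x ^ 1
          + ∑' n : ℕ, (((n + 2).factorial : ℝ))⁻¹ • x ^ (n + 2) :=
      Summable.tsum_eq_zero_add hs1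
    rw [exp_eq_tsum (𝕂 := ℝ)]
    show (∑' n : ℕ, ((n.factorial : ℝ))⁻¹ • x ^ n) - 1 - x = _
    rw [h1, h2]
    simp only [Nat.factorial_zero, Nat.factorial_one, Nat.cast_one, inv_one, one_smul,
      pow_zero, pow_one]
    abel
  have hbound : ∀ n : ℕ, ‖(((n + 2).factorial : ℝ))⁻¹ • x ^ (n + 2)‖
      ≤ ‖x‖ ^ 2 * (((n.factorial : ℝ))⁻¹ * ‖x‖ ^ n) := by
    intro n
    rw [norm_smul, norm_inv, Real.norm_natCast]
    have h1 : ‖x ^ (n + 2)‖ ≤ ‖x‖ ^ (n + 2) := norm_pow_le x (n + 2)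
    have h2 : (((n + 2).factorial : ℝ))⁻¹ ≤ ((n.factorial : ℝ))⁻¹ := by
      apply inv_anti₀
      · exact_mod_cast Nat.factorial_pos n
      · exact_mod_cast Nat.factorial_le (by omega)
    calc (((n + 2).factorial : ℝ))⁻¹ * ‖x ^ (n + 2)‖
        ≤ ((n.factorial : ℝ))⁻¹ * ‖x‖ ^ (n + 2) := by
          apply mul_le_mul h2 h1 (norm_nonneg _)
          positivity
      _ = ‖x‖ ^ 2 * (((n.factorial : ℝ))⁻¹ * ‖x‖ ^ n) := by ring
  have hsum2 : Summable fun n : ℕ => ‖x‖ ^ 2 * (((n.factorial : ℝ))⁻¹ * ‖x‖ ^ n) := by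
    apply Summable.mul_left
    simpa [div_eq_mul_inv, mul_comm] using Real.summable_pow_div_factorial ‖x‖
  have hgs : Summable fun n : ℕ => ‖(((n + 2).factorial : ℝ))⁻¹ • x ^ (n + 2)‖ :=
    Summable.of_nonneg_of_le (fun _ => norm_nonneg _) hbound hsum2
  rw [key]
  refine (norm_tsum_le_tsum_norm hgs).trans ?_
  refine (Summable.tsum_le_tsum hbound hgs hsum2).trans ?_
  rw [tsum_mul_left, real_exp_tsum]

lemma trotter_step (x y : 𝔸) :
    ‖exp x * exp y - exp (x + y)‖ ≤
      4 * (‖x‖ + ‖y‖) ^ 2 * Real.exp (2 * (‖x‖ + ‖y‖)) := by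
  set r := ‖x‖ + ‖y‖ with hr
  have hx : ‖x‖ ≤ r := le_add_of_nonneg_right (norm_nonneg y)
  have hy : ‖y‖ ≤ r := le_add_of_nonneg_left (norm_nonneg x)
  have hxy : ‖x + y‖ ≤ r := norm_add_le x y
  have hr0 : 0 ≤ r := add_nonneg (norm_nonneg x) (norm_nonneg y)
  set E := Real.exp r with hE
  have hE1 : (1 : ℝ) ≤ E := Real.one_le_exp hr0
  have hE0 : (0 : ℝ) < E := Real.exp_pos r
  have h1r : (1 : ℝ) + r ≤ E := by
    have := Real.add_one_le_exp r; linarith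
  have hrem : ∀ z : 𝔸, ‖z‖ ≤ r → ‖exp z - 1 - z‖ ≤ r ^ 2 * E := by
    intro z hz
    refine (trotter_remainder z).trans ?_
    exact mul_le_mul (pow_le_pow_left₀ (norm_nonneg z) hz 2)
      (Real.exp_le_exp.2 hz) (Real.exp_pos _).le (by positivity)
  have key : exp x * exp y - exp (x + y)
      = x * y + (1 + x) * (exp y - 1 - y) + (exp x - 1 - x) * exp y
        - (exp (x + y) - 1 - (x + y)) := by noncomm_ring
  have e1 : ‖x * y‖ ≤ r ^ 2 := by
    calc ‖x * y‖ ≤ ‖x‖ * ‖y‖ := norm_mul_le x y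
      _ ≤ r * r := mul_le_mul hx hy (norm_nonneg _) hr0
      _ = r ^ 2 := (sq r).symm
  have hRy := hrem y hy
  have hRx := hrem x hx
  have hRxy := hrem (x + y) hxy
  have hEy : ‖exp y‖ ≤ E := (trotter_norm_exp_le y).trans (Real.exp_le_exp.2 hy)
  have h1x : ‖(1 : 𝔸) + x‖ ≤ 1 + r := by
    calc ‖(1 : 𝔸) + x‖ ≤ ‖(1 : 𝔸)‖ + ‖x‖ := norm_add_le _ _
      _ = 1 + ‖x‖ := by rw [norm_one]
      _ ≤ 1 + r := by linarith
  have e2 : ‖(1 + x) * (exp y - 1 - y)‖ ≤ (1 + r) * (r ^ 2 * E) :=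
    (norm_mul_le _ _).trans (mul_le_mul h1x hRy (norm_nonneg _) (by linarith))
  have e3 : ‖(exp x - 1 - x) * exp y‖ ≤ (r ^ 2 * E) * E :=
    (norm_mul_le _ _).trans (mul_le_mul hRx hEy (norm_nonneg _) (by positivity))
  have h2r : Real.exp (2 * r) = E * E := by rw [two_mul, Real.exp_add]
  have hsq : 0 ≤ r ^ 2 := sq_nonneg r
  have hEE : (1 : ℝ) ≤ E * E := by nlinarith
  have b1 : r ^ 2 ≤ r ^ 2 * (E * E) := by
    nlinarith [mul_nonneg hsq (sub_nonneg.2 hEE)]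
  have b2 : (1 + r) * (r ^ 2 * E) ≤ r ^ 2 * (E * E) := by
    calc (1 + r) * (r ^ 2 * E) ≤ E * (r ^ 2 * E) :=
          mul_le_mul_of_nonneg_right h1r (by positivity)
      _ = r ^ 2 * (E * E) := by ring
  have b3 : (r ^ 2 * E) * E ≤ r ^ 2 * (E * E) := le_of_eq (by ring)
  have b4 : r ^ 2 * E ≤ r ^ 2 * (E * E) := by
    have hEEE : E ≤ E * E := by nlinarith
    exact mul_le_mul_of_nonneg_left hEEE hsq
  calc ‖exp x * exp y - exp (x + y)‖
      = ‖x * y + (1 + x) * (exp y - 1 - y) + (exp x - 1 - x) * exp y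
        - (exp (x + y) - 1 - (x + y))‖ := by rw [key]
    _ ≤ ‖x * y + (1 + x) * (exp y - 1 - y) + (exp x - 1 - x) * exp y‖
        + ‖exp (x + y) - 1 - (x + y)‖ := norm_sub_le _ _
    _ ≤ (‖x * y‖ + ‖(1 + x) * (exp y - 1 - y)‖ + ‖(exp x - 1 - x) * exp y‖)
        + ‖exp (x + y) - 1 - (x + y)‖ := by
        have := norm_add₃_le (a := x * y) (b := (1 + x) * (exp y - 1 - y))
          (c := (exp x - 1 - x) * exp y)
        linarith
    _ ≤ r ^ 2 * (E * E) + r ^ 2 * (E * E) + r ^ 2 * (E * E) + r ^ 2 * (E * E) := by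
        linarith
    _ = 4 * r ^ 2 * Real.exp (2 * r) := by rw [h2r]; ring

lemma trotter_pow_sub_pow (u v : 𝔸) (M : ℝ) (hu : ‖u‖ ≤ M) (hv : ‖v‖ ≤ M) :
    ∀ n : ℕ, ‖u ^ n - v ^ n‖ ≤ n * M ^ (n - 1) * ‖u - v‖ := by
  have hM : 0 ≤ M := (norm_nonneg u).trans hu
  intro n
  induction n with
  | zero => simp
  | succ n ih =>
    have key : u ^ (n + 1) - v ^ (n + 1) = u ^ n * (u - v) + (u ^ n - v ^ n) * v := by
      noncomm_ring
    rw [key]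
    have h1 : ‖u ^ n * (u - v)‖ ≤ M ^ n * ‖u - v‖ := by
      refine (norm_mul_le _ _).trans ?_
      gcongr
      exact (norm_pow_le u n).trans (by gcongr)
    have h2 : ‖(u ^ n - v ^ n) * v‖ ≤ n * M ^ n * ‖u - v‖ := by
      refine (norm_mul_le _ _).trans ?_
      calc ‖u ^ n - v ^ n‖ * ‖v‖ ≤ (n * M ^ (n - 1) * ‖u - v‖) * M := by
            apply mul_le_mul ih hv (norm_nonneg _)
            positivity
        _ ≤ n * M ^ n * ‖u - v‖ := by
            rcases Nat.eq_zero_or_pos n with h | h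
            · simp [h]
            · have : M ^ (n - 1) * M = M ^ n := by
                rw [← pow_succ]
                congr 1
                omega
              calc (↑n * M ^ (n - 1) * ‖u - v‖) * M
                  = ↑n * (M ^ (n - 1) * M) * ‖u - v‖ := by ring
                _ = ↑n * M ^ n * ‖u - v‖ := by rw [this]
                _ ≤ ↑n * M ^ n * ‖u - v‖ := le_rfl
    calc ‖u ^ n * (u - v) + (u ^ n - v ^ n) * v‖
        ≤ ‖u ^ n * (u - v)‖ + ‖(u ^ n - v ^ n) * v‖ := norm_add_le _ _
      _ ≤ M ^ n * ‖u - v‖ + n * M ^ n * ‖u - v‖ := by gcongr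
      _ = (n + 1) * M ^ n * ‖u - v‖ := by ring
      _ = (↑(n + 1)) * M ^ ((n + 1) - 1) * ‖u - v‖ := by push_cast; ring_nf

end Aux

/-- Lie–Trotter product formula in finite dimensions:
`(e^{(t/n)A} e^{(t/n)B})^n → e^{t(A+B)}` as `n → ∞`. -/
theorem lie_trotter_product_formula {E : Type*} [NormedAddCommGroup E] [NormedSpace ℝ E]
    [FiniteDimensional ℝ E] (A B : E →L[ℝ] E) (t : ℝ) :
    Tendsto (fun n : ℕ => (exp ((t / n) • A) * exp ((t / n) • B)) ^ n)
      atTop (𝓝 (exp (t • (A + B)))) := by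
  rcases subsingleton_or_nontrivial E with hE | hE
  · have : Subsingleton (E →L[ℝ] E) := inferInstance
    exact tendsto_const_nhds.congr fun n => Subsingleton.elim _ _
  · set c := |t| * (‖A‖ + ‖B‖) with hc
    have hc0 : 0 ≤ c := by positivity
    rw [tendsto_iff_norm_sub_tendsto_zero]
    apply squeeze_zero' (.of_forall fun n => norm_nonneg _)
      (g := fun n : ℕ => (4 * c ^ 2 * Real.exp (3 * c)) / n)
    · filter_upwards [eventually_gt_atTop 0] with n hn
      have hn0 : (n : ℝ) ≠ 0 := Nat.cast_ne_zero.2 hn.ne'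
      have hnpos : (0 : ℝ) < n := Nat.cast_pos.2 hn
      set x : E →L[ℝ] E := (t / n) • A
      set y : E →L[ℝ] E := (t / n) • B
      have hvn : exp (t • (A + B)) = exp (x + y) ^ n := by
        letI : NormedAlgebra ℚ (E →L[ℝ] E) := NormedAlgebra.restrictScalars ℚ ℝ (E →L[ℝ] E)
        rw [← exp_nsmul]
        congr 1
        have : x + y = (t / n) • (A + B) := by simp [x, y, smul_add]
        rw [this, ← Nat.cast_smul_eq_nsmul ℝ n ((t / (n : ℝ)) • (A + B)), smul_smul]
        congr 1
        field_simp
      have hrn : ‖x‖ + ‖y‖ = c / n := by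
        have hx : ‖x‖ = |t| / n * ‖A‖ := by
          have h := norm_smul (t / (n : ℝ)) A
          rw [Real.norm_eq_abs, abs_div, Nat.abs_cast] at h
          exact h
        have hy : ‖y‖ = |t| / n * ‖B‖ := by
          have h := norm_smul (t / (n : ℝ)) B
          rw [Real.norm_eq_abs, abs_div, Nat.abs_cast] at h
          exact h
        rw [hx, hy, hc]
        field_simp
      set r := ‖x‖ + ‖y‖ with hrdef
      have hr0 : 0 ≤ r := add_nonneg (norm_nonneg _) (norm_nonneg _)
      have hrc : r ≤ c := by
        rw [hrn]
        calc c / (n : ℝ) ≤ c / 1 := by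
              apply div_le_div_of_nonneg_left hc0 one_pos
              exact_mod_cast hn
          _ = c := div_one c
      set u := exp x * exp y
      set v := exp (x + y)
      have hM : ∀ z : E →L[ℝ] E, z = u ∨ z = v → ‖z‖ ≤ Real.exp r := by
        rintro z (rfl | rfl)
        · calc ‖exp x * exp y‖ ≤ ‖exp x‖ * ‖exp y‖ := norm_mul_le _ _
            _ ≤ Real.exp ‖x‖ * Real.exp ‖y‖ := by
                apply mul_le_mul (trotter_norm_exp_le x) (trotter_norm_exp_le y)
                  (norm_nonneg _) (Real.exp_pos _).le
            _ = Real.exp r := by rw [hrdef, Real.exp_add]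
        · exact (trotter_norm_exp_le _).trans (Real.exp_le_exp.2 (norm_add_le x y))
      have hu : ‖u‖ ≤ Real.exp r := hM u (Or.inl rfl)
      have hv : ‖v‖ ≤ Real.exp r := hM v (Or.inr rfl)
      have htel := trotter_pow_sub_pow u v (Real.exp r) hu hv n
      have hstep : ‖u - v‖ ≤ 4 * r ^ 2 * Real.exp (2 * r) := trotter_step x y
      have hMn : Real.exp r ^ (n - 1) ≤ Real.exp c := by
        calc Real.exp r ^ (n - 1) ≤ Real.exp r ^ n := by
              apply pow_le_pow_right₀ (Real.one_le_exp hr0)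
              omega
          _ = Real.exp (n * r) := by rw [← Real.exp_nat_mul]
          _ ≤ Real.exp c := by
              apply Real.exp_le_exp.2
              rw [hrn]
              field_simp
              exact le_rfl
      have hexp2 : Real.exp (2 * r) ≤ Real.exp (2 * c) := by
        apply Real.exp_le_exp.2; linarith
      rw [hvn]
      calc ‖u ^ n - v ^ n‖ ≤ n * Real.exp r ^ (n - 1) * ‖u - v‖ := htel
        _ ≤ n * Real.exp c * (4 * r ^ 2 * Real.exp (2 * c)) := by
            have h1 : ‖u - v‖ ≤ 4 * r ^ 2 * Real.exp (2 * c) := by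
              refine hstep.trans ?_
              have h2 : 4 * r ^ 2 * Real.exp (2 * r) ≤ 4 * r ^ 2 * Real.exp (2 * c) :=
                mul_le_mul_of_nonneg_left hexp2 (by positivity)
              exact h2
            apply mul_le_mul _ h1 (norm_nonneg _) (by positivity)
            exact mul_le_mul_of_nonneg_left hMn (Nat.cast_nonneg n)
        _ = n * r ^ 2 * (4 * (Real.exp c * Real.exp (2 * c))) := by ring
        _ = (4 * c ^ 2 * Real.exp (3 * c)) / n := by
            rw [hrn, ← Real.exp_add, show c + 2 * c = 3 * c by ring]
            field_simp
    · exact tendsto_const_div_atTop_nhds_zero_nat _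
end

section
/- Let ξ be a random variable taking values 1 and 2 each with probability 1/2, and let ξ₁, ξ₂ be i.i.d. copies. Let A₁, A₂ be linear operators on a finite-dimensional vector space. Then the expectation over (ξ₁, ξ₂) of e^{Δt A_{ξ₁}} e^{Δt A_{ξ₂}} - e^{Δt(A₁+A₂)} equals (1/4)(A₁ - A₂)² Δt² + O(Δt³) as Δt → 0. -/
open NormedSpace

lemma exp_taylor2 {𝔸 : Type*} [NormedRing 𝔸] [NormedAlgebra ℝ 𝔸] [CompleteSpace 𝔸] (x : 𝔸) :
    ‖exp x - (1 + x + (2⁻¹ : ℝ) • (x * x))‖ ≤ ‖x‖ ^ 3 * Real.exp ‖x‖ := by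
  have hs := NormedSpace.expSeries_summable' (𝕂 := ℝ) x
  have h0 : ∑ n ∈ Finset.range 3, (Nat.factorial n : ℝ)⁻¹ • x ^ n
      + ∑' n : ℕ, (Nat.factorial (n + 3) : ℝ)⁻¹ • x ^ (n + 3) = exp x := by
    rw [exp_eq_tsum (𝕂 := ℝ)]
    exact hs.sum_add_tsum_nat_add 3
  have hpart : ∑ n ∈ Finset.range 3, (Nat.factorial n : ℝ)⁻¹ • x ^ n
      = 1 + x + (2⁻¹ : ℝ) • (x * x) := by
    simp [Finset.sum_range_succ, Nat.factorial, pow_succ]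
  have key : exp x - (1 + x + (2⁻¹ : ℝ) • (x * x))
      = ∑' n : ℕ, (Nat.factorial (n + 3) : ℝ)⁻¹ • x ^ (n + 3) := by
    rw [← h0, hpart]; abel
  rw [key]
  have hb : HasSum (fun n : ℕ => ‖x‖ ^ 3 * ((Nat.factorial n : ℝ)⁻¹ * ‖x‖ ^ n))
      (‖x‖ ^ 3 * Real.exp ‖x‖) := by
    have := NormedSpace.exp_series_hasSum_exp' (𝕂 := ℝ) (‖x‖)
    rw [Real.exp_eq_exp_ℝ]
    simpa [smul_eq_mul] using this.mul_left (‖x‖ ^ 3)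
  refine tsum_of_norm_bounded hb fun n => ?_
  have h1 : ‖(Nat.factorial (n + 3) : ℝ)⁻¹ • x ^ (n + 3)‖
      ≤ (Nat.factorial (n + 3) : ℝ)⁻¹ * ‖x‖ ^ (n + 3) := by
    rw [norm_smul]
    gcongr
    · simp
    · exact norm_pow_le' x (by omega)
  refine h1.trans ?_
  have h2 : (Nat.factorial (n + 3) : ℝ)⁻¹ ≤ (Nat.factorial n : ℝ)⁻¹ := by
    apply inv_anti₀
    · exact_mod_cast Nat.factorial_pos n
    · exact_mod_cast Nat.factorial_le (by omega)
  calc (Nat.factorial (n + 3) : ℝ)⁻¹ * ‖x‖ ^ (n + 3)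
      ≤ (Nat.factorial n : ℝ)⁻¹ * ‖x‖ ^ (n + 3) := by gcongr
    _ = ‖x‖ ^ 3 * ((Nat.factorial n : ℝ)⁻¹ * ‖x‖ ^ n) := by ring

set_option maxHeartbeats 1000000 in
set_option synthInstance.maxHeartbeats 200000 in
/-- Mean local error of the random sub-lattice schedule: with `ξ₁, ξ₂` i.i.d. uniform in `{1,2}`,
`E[e^{ΔtA_{ξ₁}} e^{ΔtA_{ξ₂}}] - e^{Δt(A₁+A₂)} = (1/4)(A₁-A₂)² Δt² + O(Δt³)`. -/
theorem random_schedule_mean_local_error {E : Type*} [NormedAddCommGroup E] [NormedSpace ℝ E]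
    [FiniteDimensional ℝ E] (A : Fin 2 → (E →L[ℝ] E)) :
    ∃ C > 0, ∀ Δt : ℝ, Δt ∈ Set.Ioc (0 : ℝ) 1 →
      ‖(1 / 4 : ℝ) • (∑ ξ₁ : Fin 2, ∑ ξ₂ : Fin 2, exp (Δt • A ξ₁) * exp (Δt • A ξ₂))
          - exp (Δt • (A 0 + A 1))
          - ((Δt ^ 2) / 4) • ((A 0 - A 1) * (A 0 - A 1))‖ ≤ C * Δt ^ 3 := by
  set B := A 0 with hBdef
  set C := A 1 with hCdef
  set M : ℝ := ‖B‖ + ‖C‖ + 1 with hMdef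
  have hM0 : (1 : ℝ) ≤ M := by
    have := norm_nonneg B; have := norm_nonneg C; rw [hMdef]; linarith
  have hMB : ‖B‖ ≤ M := by have := norm_nonneg C; rw [hMdef]; linarith
  have hMC : ‖C‖ ≤ M := by have := norm_nonneg B; rw [hMdef]; linarith
  have hMS : ‖B + C‖ ≤ M := (norm_add_le _ _).trans (by rw [hMdef]; linarith)
  set K : ℝ := M ^ 3 * Real.exp M with hKdef
  have hK0 : 0 < K := by
    rw [hKdef]; positivity
  set L : ℝ := 1 + M + M ^ 2 with hLdef
  have hL0 : 0 < L := by rw [hLdef]; nlinarith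
  set Q3 : E →L[ℝ] E := (1 / 8 : ℝ) • (B * (B * B) + B * (C * C) + C * (B * B) + C * (C * C)
      + (B * (B * B) + B * (B * C) + C * (C * B) + C * (C * C))) with hQ3def
  set Q4 : E →L[ℝ] E := (1 / 16 : ℝ) • (B * (B * (B * B)) + B * (B * (C * C))
      + C * (C * (B * B)) + C * (C * (C * C))) with hQ4def
  refine ⟨‖Q3‖ + ‖Q4‖ + 2 * L * K + K ^ 2 + K + 1, by nlinarith [norm_nonneg Q3, norm_nonneg Q4], fun t ht => ?_⟩
  obtain ⟨ht0, ht1⟩ := ht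
  have ht3 : (0 : ℝ) < t ^ 3 := by positivity
  have ht31 : t ^ 3 ≤ 1 := pow_le_one₀ ht0.le ht1
  set P : (E →L[ℝ] E) → (E →L[ℝ] E) :=
    fun X => 1 + t • X + (2⁻¹ : ℝ) • ((t • X) * (t • X)) with hPdef
  have hR : ∀ X : E →L[ℝ] E, ‖X‖ ≤ M → ‖exp (t • X) - P X‖ ≤ K * t ^ 3 := by
    intro X hX
    refine (exp_taylor2 (t • X)).trans ?_
    rw [norm_smul t X, Real.norm_eq_abs, abs_of_pos ht0]
    have h1 : t * ‖X‖ ≤ M := by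
      calc t * ‖X‖ ≤ 1 * M := mul_le_mul ht1 hX (norm_nonneg X) zero_le_one
        _ = M := one_mul M
    calc (t * ‖X‖) ^ 3 * Real.exp (t * ‖X‖)
        ≤ (t ^ 3 * M ^ 3) * Real.exp M := by
          refine mul_le_mul ?_ (Real.exp_le_exp.2 h1) (Real.exp_pos _).le (by positivity)
          rw [mul_pow]
          gcongr
        _ = K * t ^ 3 := by rw [hKdef]; ring
  have hPn : ∀ X : E →L[ℝ] E, ‖X‖ ≤ M → ‖P X‖ ≤ L := by
    intro X hX
    have h1 : ‖t • X‖ ≤ M := by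
      rw [norm_smul t X, Real.norm_eq_abs, abs_of_pos ht0]
      calc t * ‖X‖ ≤ 1 * M := mul_le_mul ht1 hX (norm_nonneg X) zero_le_one
        _ = M := one_mul M
    have h2 : ‖(2⁻¹ : ℝ) • ((t • X) * (t • X))‖ ≤ M ^ 2 := by
      rw [norm_smul (2⁻¹:ℝ) ((t • X) * (t • X)), Real.norm_eq_abs]
      have := norm_mul_le (t • X) (t • X)
      have hn : ‖(t • X) * (t • X)‖ ≤ M ^ 2 := by
        refine this.trans ?_
        rw [sq]
        exact mul_le_mul h1 h1 (norm_nonneg _) (by linarith)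
      calc |(2⁻¹ : ℝ)| * ‖(t • X) * (t • X)‖ ≤ 1 * (M ^ 2) := by
            refine mul_le_mul (by rw [abs_of_pos] <;> norm_num) hn (norm_nonneg _) zero_le_one
        _ = M ^ 2 := one_mul _
    calc ‖P X‖ ≤ ‖(1 : E →L[ℝ] E)‖ + ‖t • X‖ + ‖(2⁻¹ : ℝ) • ((t • X) * (t • X))‖ :=
          norm_add₃_le
      _ ≤ 1 + M + M ^ 2 := by
          gcongr
          exact ContinuousLinearMap.norm_id_le
      _ = L := hLdef.symm
  set RB := exp (t • B) - P B with hRBdef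
  set RC := exp (t • C) - P C with hRCdef
  set RS := exp (t • (B + C)) - P (B + C) with hRSdef
  have eB : exp (t • B) = P B + RB := by rw [hRBdef]; abel
  have eC : exp (t • C) = P C + RC := by rw [hRCdef]; abel
  have eS : exp (t • (B + C)) = P (B + C) + RS := by rw [hRSdef]; abel
  rw [Fin.sum_univ_two]
  simp only [Fin.sum_univ_two]
  rw [eB, eC, eS]
  set MAIN : E →L[ℝ] E := (1 / 4 : ℝ) • (P B * P B + P B * P C + P C * P B + P C * P C)
      - P (B + C) - ((t ^ 2) / 4) • ((B - C) * (B - C)) with hMAINdef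
  set CROSS : E →L[ℝ] E := (1 / 4 : ℝ) • ((P B * RB + RB * P B + RB * RB)
      + (P B * RC + RB * P C + RB * RC) + (P C * RB + RC * P B + RC * RB)
      + (P C * RC + RC * P C + RC * RC)) - RS with hCROSSdef
  have split : (1 / 4 : ℝ) • ((P B + RB) * (P B + RB) + (P B + RB) * (P C + RC)
        + ((P C + RC) * (P B + RB) + (P C + RC) * (P C + RC)))
      - (P (B + C) + RS) - ((t ^ 2) / 4) • ((B - C) * (B - C)) = MAIN + CROSS := by
    rw [hMAINdef, hCROSSdef]
    simp only [mul_add, add_mul, smul_add]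
    abel
  rw [split]
  have hMAIN : MAIN = t ^ 3 • Q3 + t ^ 4 • Q4 := by
    rw [hMAINdef, hQ3def, hQ4def, hPdef]
    simp only [smul_add, smul_sub, mul_add, add_mul, sub_mul, mul_sub, smul_mul_assoc,
      mul_smul_comm, smul_smul, mul_one, one_mul, mul_assoc]
    module
  have hRBn : ‖RB‖ ≤ K * t ^ 3 := hR B hMB
  have hRCn : ‖RC‖ ≤ K * t ^ 3 := hR C hMC
  have hRSn : ‖RS‖ ≤ K * t ^ 3 := hR (B + C) hMS
  have hPBn : ‖P B‖ ≤ L := hPn B hMB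
  have hPCn : ‖P C‖ ≤ L := hPn C hMC
  have hKt : 0 ≤ K * t ^ 3 := by positivity
  have hG : ∀ p q r s : E →L[ℝ] E, ‖p‖ ≤ L → ‖q‖ ≤ L → ‖r‖ ≤ K * t ^ 3 → ‖s‖ ≤ K * t ^ 3 →
      ‖p * s + r * q + r * s‖ ≤ (2 * L * K + K ^ 2) * t ^ 3 := by
    intro p q r s hp hq hr hs
    have h1 : ‖p * s‖ ≤ L * (K * t ^ 3) :=
      (norm_mul_le _ _).trans (mul_le_mul hp hs (norm_nonneg _) hL0.le)
    have h2 : ‖r * q‖ ≤ (K * t ^ 3) * L :=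
      (norm_mul_le _ _).trans (mul_le_mul hr hq (norm_nonneg _) hKt)
    have h3 : ‖r * s‖ ≤ (K * t ^ 3) * (K * t ^ 3) :=
      (norm_mul_le _ _).trans (mul_le_mul hr hs (norm_nonneg _) hKt)
    have h4 : (K * t ^ 3) * (K * t ^ 3) ≤ K ^ 2 * t ^ 3 := by nlinarith
    calc ‖p * s + r * q + r * s‖ ≤ ‖p * s‖ + ‖r * q‖ + ‖r * s‖ := norm_add₃_le
      _ ≤ L * (K * t ^ 3) + (K * t ^ 3) * L + K ^ 2 * t ^ 3 := by linarith
      _ = (2 * L * K + K ^ 2) * t ^ 3 := by ring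
  have hCROSSn : ‖CROSS‖ ≤ (2 * L * K + K ^ 2 + K) * t ^ 3 := by
    have g1 := hG (P B) (P B) RB RB hPBn hPBn hRBn hRBn
    have g2 := hG (P B) (P C) RB RC hPBn hPCn hRBn hRCn
    have g3 := hG (P C) (P B) RC RB hPCn hPBn hRCn hRBn
    have g4 := hG (P C) (P C) RC RC hPCn hPCn hRCn hRCn
    have hsum : ‖(P B * RB + RB * P B + RB * RB) + (P B * RC + RB * P C + RB * RC)
        + (P C * RB + RC * P B + RC * RB) + (P C * RC + RC * P C + RC * RC)‖
        ≤ 4 * ((2 * L * K + K ^ 2) * t ^ 3) := by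
      calc _ ≤ ‖(P B * RB + RB * P B + RB * RB) + (P B * RC + RB * P C + RB * RC)
            + (P C * RB + RC * P B + RC * RB)‖ + ‖P C * RC + RC * P C + RC * RC‖ :=
            norm_add_le _ _
        _ ≤ (‖(P B * RB + RB * P B + RB * RB) + (P B * RC + RB * P C + RB * RC)‖
            + ‖P C * RB + RC * P B + RC * RB‖) + ‖P C * RC + RC * P C + RC * RC‖ := by
            gcongr
            exact norm_add_le _ _
        _ ≤ ((‖P B * RB + RB * P B + RB * RB‖ + ‖P B * RC + RB * P C + RB * RC‖)
            + ‖P C * RB + RC * P B + RC * RB‖) + ‖P C * RC + RC * P C + RC * RC‖ := by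
            gcongr
            exact norm_add_le _ _
        _ ≤ 4 * ((2 * L * K + K ^ 2) * t ^ 3) := by linarith
    have hWn : ‖(1 / 4 : ℝ) • ((P B * RB + RB * P B + RB * RB) + (P B * RC + RB * P C + RB * RC)
        + (P C * RB + RC * P B + RC * RB) + (P C * RC + RC * P C + RC * RC))‖
        = 1 / 4 * ‖(P B * RB + RB * P B + RB * RB) + (P B * RC + RB * P C + RB * RC)
        + (P C * RB + RC * P B + RC * RB) + (P C * RC + RC * P C + RC * RC)‖ := by
      rw [norm_smul (1 / 4 : ℝ) ((P B * RB + RB * P B + RB * RB) + (P B * RC + RB * P C + RB * RC)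
        + (P C * RB + RC * P B + RC * RB) + (P C * RC + RC * P C + RC * RC)), Real.norm_eq_abs,
        abs_of_pos (by norm_num : (0:ℝ) < 1 / 4)]
    rw [hCROSSdef]
    calc ‖(1 / 4 : ℝ) • ((P B * RB + RB * P B + RB * RB) + (P B * RC + RB * P C + RB * RC)
          + (P C * RB + RC * P B + RC * RB) + (P C * RC + RC * P C + RC * RC)) - RS‖
        ≤ ‖(1 / 4 : ℝ) • ((P B * RB + RB * P B + RB * RB) + (P B * RC + RB * P C + RB * RC)
          + (P C * RB + RC * P B + RC * RB) + (P C * RC + RC * P C + RC * RC))‖ + ‖RS‖ :=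
          norm_sub_le _ _
      _ ≤ (2 * L * K + K ^ 2 + K) * t ^ 3 := by rw [hWn]; nlinarith [hsum, hRSn, norm_nonneg RS]
  have hMAINn : ‖MAIN‖ ≤ (‖Q3‖ + ‖Q4‖) * t ^ 3 := by
    rw [hMAIN]
    calc ‖t ^ 3 • Q3 + t ^ 4 • Q4‖ ≤ ‖t ^ 3 • Q3‖ + ‖t ^ 4 • Q4‖ := norm_add_le _ _
      _ = t ^ 3 * ‖Q3‖ + t ^ 4 * ‖Q4‖ := by
          rw [norm_smul (t^3) Q3, norm_smul (t^4) Q4, Real.norm_eq_abs, Real.norm_eq_abs,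
            abs_of_pos ht3, abs_of_pos (by positivity : (0:ℝ) < t ^ 4)]
      _ ≤ t ^ 3 * ‖Q3‖ + t ^ 3 * ‖Q4‖ := by
          have ht4 : t ^ 4 ≤ t ^ 3 := by nlinarith
          have := mul_le_mul_of_nonneg_right ht4 (norm_nonneg Q4)
          linarith
      _ = (‖Q3‖ + ‖Q4‖) * t ^ 3 := by ring
  calc ‖MAIN + CROSS‖ ≤ ‖MAIN‖ + ‖CROSS‖ := norm_add_le _ _
    _ ≤ (‖Q3‖ + ‖Q4‖) * t ^ 3 + (2 * L * K + K ^ 2 + K) * t ^ 3 := by linarith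
    _ ≤ (‖Q3‖ + ‖Q4‖ + 2 * L * K + K ^ 2 + K + 1) * t ^ 3 := by nlinarith
end
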